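/- With the notation of the CB-NOMA model, for every threshold t ∈ (0,1) the conditional average minimal transmit power is finite: ∫_t^1 ∫_0^∞ ∫_0^∞ P_min(x,y,z)·g(x)·g(y)·b_t(z) dx dy dz < ∞ (equivalently, P_min is integrable with respect to the product of the densities g(x), g(y) and b_t(z)). -/

import Mathlib

set_option maxHeartbeats 1000000


open MeasureTheory Set

lemma pow_mul_exp_integrable (n : ℕ) :
    IntegrableOn (fun x : ℝ => x ^ n * Real.exp (-x)) (Ioi 0) := by
  have h := Real.GammaIntegral_convergent (s := (n : ℝ) + 1) (by positivity)
  refine (h.congr_fun ?_ measurableSet_Ioi)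
  intro x hx
  simp only [show ((n : ℝ) + 1 - 1) = (n : ℝ) by ring, Real.rpow_natCast]
  ring

/-- For every threshold `t ∈ (0,1)`, the minimal transmit power `P_min`
weighted by the product of the densities `g(x)`, `g(y)`, `b_t(z)` is integrable
over `(0,∞) × (0,∞) × [t,1]`, i.e. the conditional average minimal transmit power
is finite. -/
theorem cbnoma_avg_power_finite (M : ℕ) (hM : 2 ≤ M)
    (β1 β2 γ1 γ2 t : ℝ) (hβ : β2 ≤ β1) (hβ2 : 0 < β2)
    (hγ1 : 0 < γ1) (hγ2 : 0 < γ2) (ht0 : 0 < t) (ht1 : t < 1) :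
    IntegrableOn
      (fun p : ℝ × ℝ × ℝ =>
        (γ1 * (1 + γ2) / (β1 * p.1) + γ2 / min (β1 * p.1) (β2 * p.2.1 * p.2.2))
          * (p.1 ^ (M - 1) * Real.exp (-p.1) / (Nat.factorial (M - 1) : ℝ))
          * (p.2.1 ^ (M - 1) * Real.exp (-p.2.1) / (Nat.factorial (M - 1) : ℝ))
          * (((M : ℝ) - 1) * (1 - p.2.2) ^ (M - 2) / (1 - t) ^ (M - 1)))
      (Ioi (0 : ℝ) ×ˢ Ioi (0 : ℝ) ×ˢ Icc t 1) := by
  have hβ1 : (0:ℝ) < β1 := lt_of_lt_of_le hβ2 hβ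
  set A : ℝ := (γ1 * (1 + γ2) + γ2) / β1 with hA
  set B : ℝ := γ2 / (β2 * t) with hB
  set C : ℝ := ((M : ℝ) - 1) / (1 - t) ^ (M - 1) with hC
  set K : ℝ := (Nat.factorial (M - 1) : ℝ) with hK
  have hKpos : (0:ℝ) < K := by positivity
  have hApos : 0 < A := by positivity
  have hBpos : 0 < B := by positivity
  have hCpos : 0 < C := by
    have h1 : (0:ℝ) < (M:ℝ) - 1 := by
      have : (2:ℝ) ≤ M := by exact_mod_cast hM
      linarith
    exact div_pos h1 (pow_pos (by linarith) _)
  -- the dominating function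
  set G : ℝ × ℝ × ℝ → ℝ := fun p =>
      ((A * (p.1 ^ (M - 2) * Real.exp (-p.1)) / K) *
        ((p.2.1 ^ (M - 1) * Real.exp (-p.2.1) / K) * C)) +
      ((p.1 ^ (M - 1) * Real.exp (-p.1) / K) *
        ((B * (p.2.1 ^ (M - 2) * Real.exp (-p.2.1)) / K) * C)) with hG
  have hGint : IntegrableOn G (Ioi (0:ℝ) ×ˢ Ioi (0:ℝ) ×ˢ Icc t 1) := by
    have hvol : (volume : Measure (ℝ × ℝ × ℝ)) = (volume : Measure ℝ).prod volume :=
      rfl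
    have hfin : IntegrableOn (fun _ : ℝ => C) (Icc t 1) :=
      integrableOn_const (by simp)
    have hx1 : IntegrableOn (fun x : ℝ => A * (x ^ (M - 2) * Real.exp (-x)) / K) (Ioi 0) := by
      exact IntegrableOn.congr_fun ((pow_mul_exp_integrable (M - 2)).const_mul (A / K))
        (fun x _ => by ring) measurableSet_Ioi
    have hx2 : IntegrableOn (fun x : ℝ => x ^ (M - 1) * Real.exp (-x) / K) (Ioi 0) := by
      exact IntegrableOn.congr_fun ((pow_mul_exp_integrable (M - 1)).const_mul K⁻¹)
        (fun x _ => by ring) measurableSet_Ioi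
    have hy1 : IntegrableOn (fun x : ℝ => B * (x ^ (M - 2) * Real.exp (-x)) / K) (Ioi 0) := by
      exact IntegrableOn.congr_fun ((pow_mul_exp_integrable (M - 2)).const_mul (B / K))
        (fun x _ => by ring) measurableSet_Ioi
    have inner1 : IntegrableOn
        (fun q : ℝ × ℝ => (q.1 ^ (M - 1) * Real.exp (-q.1) / K) * C)
        (Ioi (0:ℝ) ×ˢ Icc t 1) := by
      rw [IntegrableOn, Measure.volume_eq_prod, ← Measure.prod_restrict]
      exact hx2.mul_prod hfin
    have inner2 : IntegrableOn
        (fun q : ℝ × ℝ => (B * (q.1 ^ (M - 2) * Real.exp (-q.1)) / K) * C)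
        (Ioi (0:ℝ) ×ˢ Icc t 1) := by
      rw [IntegrableOn, Measure.volume_eq_prod, ← Measure.prod_restrict]
      exact hy1.mul_prod hfin
    have t1 : IntegrableOn
        (fun p : ℝ × ℝ × ℝ => (A * (p.1 ^ (M - 2) * Real.exp (-p.1)) / K) *
          ((p.2.1 ^ (M - 1) * Real.exp (-p.2.1) / K) * C))
        (Ioi (0:ℝ) ×ˢ Ioi (0:ℝ) ×ˢ Icc t 1) := by
      rw [IntegrableOn, Measure.volume_eq_prod, ← Measure.prod_restrict]
      exact hx1.mul_prod inner1
    have t2 : IntegrableOn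
        (fun p : ℝ × ℝ × ℝ => (p.1 ^ (M - 1) * Real.exp (-p.1) / K) *
          ((B * (p.2.1 ^ (M - 2) * Real.exp (-p.2.1)) / K) * C))
        (Ioi (0:ℝ) ×ˢ Ioi (0:ℝ) ×ˢ Icc t 1) := by
      rw [IntegrableOn, Measure.volume_eq_prod, ← Measure.prod_restrict]
      exact hx2.mul_prod inner2
    exact t1.add t2
  refine Integrable.mono' hGint ?_ ?_
  · -- measurability
    apply Measurable.aestronglyMeasurable
    fun_prop
  · -- pointwise bound a.e.
    have hmeas : MeasurableSet (Ioi (0:ℝ) ×ˢ Ioi (0:ℝ) ×ˢ Icc t 1) :=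
      measurableSet_Ioi.prod (measurableSet_Ioi.prod measurableSet_Icc)
    filter_upwards [ae_restrict_mem hmeas] with p hp
    obtain ⟨hx, hy, hz⟩ := hp
    simp only [mem_Ioi] at hx hy
    obtain ⟨hzt, hz1⟩ := hz
    have hzpos : 0 < p.2.2 := lt_of_lt_of_le ht0 hzt
    have hxb : 0 < β1 * p.1 := by positivity
    have hyz : 0 < β2 * p.2.1 * p.2.2 := by positivity
    have hmin : 0 < min (β1 * p.1) (β2 * p.2.1 * p.2.2) := lt_min hxb hyz
    -- bound on P_min
    have hP : γ1 * (1 + γ2) / (β1 * p.1) + γ2 / min (β1 * p.1) (β2 * p.2.1 * p.2.2)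
        ≤ A / p.1 + B / p.2.1 := by
      have h1 : γ2 / min (β1 * p.1) (β2 * p.2.1 * p.2.2)
          ≤ γ2 / (β1 * p.1) + γ2 / (β2 * p.2.1 * p.2.2) := by
        rcases min_choice (β1 * p.1) (β2 * p.2.1 * p.2.2) with h | h <;> rw [h]
        · nlinarith [div_nonneg hγ2.le hyz.le]
        · nlinarith [div_nonneg hγ2.le hxb.le]
      have h2 : γ2 / (β2 * p.2.1 * p.2.2) ≤ B / p.2.1 := by
        rw [hB, div_div]
        apply div_le_div_of_nonneg_left hγ2.le (by positivity)
        nlinarith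
      have h3 : γ1 * (1 + γ2) / (β1 * p.1) + γ2 / (β1 * p.1) = A / p.1 := by
        field_simp [hA]
        rw [hA]
        field_simp
      linarith
    -- nonnegativity pieces
    have hgx : 0 ≤ p.1 ^ (M - 1) * Real.exp (-p.1) / K := by positivity
    have hgy : 0 ≤ p.2.1 ^ (M - 1) * Real.exp (-p.2.1) / K := by positivity
    have hbz : 0 ≤ ((M : ℝ) - 1) * (1 - p.2.2) ^ (M - 2) / (1 - t) ^ (M - 1) := by
      have hM1 : (0:ℝ) ≤ (M:ℝ) - 1 := by
        have : (2:ℝ) ≤ M := by exact_mod_cast hM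
        linarith
      have h2 : (0:ℝ) ≤ 1 - p.2.2 := by linarith
      exact div_nonneg (mul_nonneg hM1 (pow_nonneg h2 _)) (pow_nonneg (by linarith) _)
    have hbzC : ((M : ℝ) - 1) * (1 - p.2.2) ^ (M - 2) / (1 - t) ^ (M - 1) ≤ C := by
      rw [hC]
      have hM1 : (0:ℝ) ≤ (M:ℝ) - 1 := by
        have : (2:ℝ) ≤ M := by exact_mod_cast hM
        linarith
      have h1 : (1 - p.2.2) ^ (M - 2) ≤ 1 :=
        pow_le_one₀ (by linarith) (by linarith)
      have hden : (0:ℝ) < (1 - t) ^ (M - 1) := pow_pos (by linarith) _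
      have hnum : ((M : ℝ) - 1) * (1 - p.2.2) ^ (M - 2) ≤ (M : ℝ) - 1 := by nlinarith
      gcongr ?_ / (1 - t) ^ (M - 1)
    have hPnn : 0 ≤ γ1 * (1 + γ2) / (β1 * p.1) + γ2 / min (β1 * p.1) (β2 * p.2.1 * p.2.2) := by
      positivity
    rw [Real.norm_eq_abs, abs_of_nonneg (by positivity)]
    have step1 :
        (γ1 * (1 + γ2) / (β1 * p.1) + γ2 / min (β1 * p.1) (β2 * p.2.1 * p.2.2))
          * (p.1 ^ (M - 1) * Real.exp (-p.1) / K)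
          * (p.2.1 ^ (M - 1) * Real.exp (-p.2.1) / K)
          * (((M : ℝ) - 1) * (1 - p.2.2) ^ (M - 2) / (1 - t) ^ (M - 1))
        ≤ (A / p.1 + B / p.2.1)
          * (p.1 ^ (M - 1) * Real.exp (-p.1) / K)
          * (p.2.1 ^ (M - 1) * Real.exp (-p.2.1) / K) * C := by
      gcongr
    refine le_trans step1 (le_of_eq ?_)
    rw [hG]
    have hxM : p.1 ^ (M - 1) = p.1 * p.1 ^ (M - 2) := by
      rw [show M - 1 = (M - 2) + 1 by omega, pow_succ']
    have hyM : p.2.1 ^ (M - 1) = p.2.1 * p.2.1 ^ (M - 2) := by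
      rw [show M - 1 = (M - 2) + 1 by omega, pow_succ']
    simp only
    rw [hxM, hyM]
    field_simp
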